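/- The sequence {x_n} in M = [−1,1] ⊆ ℝ defined by x_n = 0 if n is a perfect square and x_n = 1 − 1/n otherwise, is statistically maximizing in M (with witness x = 0 and δ(0,M) = 1) but is not a maximizing sequence. -/

import Mathlib

open Filter
open scoped Classical

/-- Farthest distance from `x` to a set `M ⊆ ℝ`. -/
noncomputable def fdist (x : ℝ) (M : Set ℝ) : ℝ :=
  sSup ((fun m => |x - m|) '' M)

/-- Statistical convergence of a real sequence. -/
def StatConv (x : ℕ → ℝ) (a : ℝ) : Prop :=
  ∀ ε > 0, Tendsto (fun n : ℕ =>
    (((Finset.range n).filter (fun k => ε ≤ |x k - a|)).card : ℝ) / n)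
    atTop (nhds 0)

lemma fdist_bddAbove (p : ℝ) : BddAbove ((fun m => |p - m|) '' Set.Icc (-1 : ℝ) 1) := by
  refine ⟨|p| + 1, ?_⟩
  rintro y ⟨m, hm, rfl⟩
  have h1 : |m| ≤ 1 := abs_le.mpr ⟨hm.1, hm.2⟩
  calc |p - m| ≤ |p| + |m| := abs_sub p m
    _ ≤ |p| + 1 := by linarith

lemma fdist_lower (p : ℝ) : |p| + 1 ≤ fdist p (Set.Icc (-1 : ℝ) 1) := by
  rcases le_or_gt 0 p with hp | hp
  · have : |p| + 1 = |p - (-1)| := by rw [abs_of_nonneg hp]; rw [abs_of_nonneg] <;> linarith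
    rw [this]
    exact le_csSup (fdist_bddAbove p) ⟨-1, by norm_num, rfl⟩
  · have : |p| + 1 = |p - 1| := by
      rw [abs_of_neg hp, abs_of_nonpos (by linarith)]; ring
    rw [this]
    exact le_csSup (fdist_bddAbove p) ⟨1, by norm_num, rfl⟩

lemma fdist_zero : fdist 0 (Set.Icc (-1 : ℝ) 1) = 1 := by
  refine le_antisymm ?_ (by simpa using fdist_lower 0)
  refine csSup_le ⟨1, ⟨1, by norm_num, by norm_num⟩⟩ ?_
  rintro y ⟨m, hm, rfl⟩
  show |(0:ℝ) - m| ≤ 1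
  rw [zero_sub, abs_neg]
  exact abs_le.mpr ⟨hm.1, hm.2⟩

lemma sqrt_filter_card (n : ℕ) :
    ((Finset.range n).filter (fun k => ∃ m : ℕ, k = m ^ 2)).card ≤ Nat.sqrt n + 1 := by
  have hsub : (Finset.range n).filter (fun k => ∃ m : ℕ, k = m ^ 2) ⊆
      (Finset.range (Nat.sqrt n + 1)).image (fun m => m ^ 2) := by
    intro k hk
    simp only [Finset.mem_filter, Finset.mem_range] at hk
    obtain ⟨hkn, m, rfl⟩ := hk
    refine Finset.mem_image.mpr ⟨m, ?_, rfl⟩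
    rw [Finset.mem_range, Nat.lt_succ_iff, Nat.le_sqrt]
    nlinarith
  calc _ ≤ ((Finset.range (Nat.sqrt n + 1)).image (fun m => m ^ 2)).card :=
        Finset.card_le_card hsub
    _ ≤ Nat.sqrt n + 1 := (Finset.card_image_le).trans (by simp)

theorem stat_maximizing_not_maximizing :
    let x : ℕ → ℝ := fun n => if ∃ m : ℕ, n = m ^ 2 then 0 else 1 - 1 / n
    (fdist 0 (Set.Icc (-1 : ℝ) 1) = 1 ∧
      StatConv (fun n => |x n - 0|) (fdist 0 (Set.Icc (-1 : ℝ) 1))) ∧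
    ¬ ∃ p : ℝ, Tendsto (fun n => |x n - p|) atTop
        (nhds (fdist p (Set.Icc (-1 : ℝ) 1))) := by
  intro x
  have hx : ∀ n : ℕ, x n = if ∃ m : ℕ, n = m ^ 2 then (0:ℝ) else 1 - 1 / (n:ℝ) := fun n => rfl
  refine ⟨⟨fdist_zero, ?_⟩, ?_⟩
  · -- statistical convergence
    rw [fdist_zero]
    intro ε hε
    set N : ℕ := ⌈(1:ℝ)/ε⌉₊ with hN
    -- key: bad indices are squares or ≤ N
    have key : ∀ k : ℕ, ε ≤ |(|x k - 0|) - 1| → (∃ m : ℕ, k = m ^ 2) ∨ k ≤ N := by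
      intro k hk
      by_cases hsq : ∃ m : ℕ, k = m ^ 2
      · exact Or.inl hsq
      · right
        have hk1 : 1 ≤ k := by
          rcases Nat.eq_zero_or_pos k with h0 | h1
          · exact absurd ⟨0, by simp [h0]⟩ hsq
          · exact h1
        have hxk : x k = 1 - 1 / k := by rw [hx]; simp [hsq]
        have hkr : (1:ℝ) ≤ (k:ℝ) := by exact_mod_cast hk1
        have hinv : (1:ℝ)/k ≤ 1 := by
          rw [div_le_one (by linarith)]; exact hkr
        have hinvpos : (0:ℝ) < 1/k := by positivity
        have habs : |x k - 0| = 1 - 1/k := by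
          rw [hxk, sub_zero, abs_of_nonneg (by linarith)]
        rw [habs] at hk
        have : |(1 - 1/(k:ℝ)) - 1| = 1/k := by
          rw [show (1 - 1/(k:ℝ)) - 1 = -(1/k) by ring, abs_neg, abs_of_pos hinvpos]
        rw [this] at hk
        -- ε ≤ 1/k ⇒ k ≤ 1/ε ≤ N
        have hkle : (k:ℝ) ≤ 1/ε := by
          rw [le_div_iff₀ hε]
          calc (k:ℝ) * ε ≤ (k:ℝ) * (1/k) := by
                exact mul_le_mul_of_nonneg_left hk (by positivity)
            _ = 1 := by field_simp
        exact_mod_cast hkle.trans (Nat.le_ceil _)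
    have hcard : ∀ n : ℕ,
        ((Finset.range n).filter (fun k => ε ≤ |(|x k - 0|) - 1|)).card
          ≤ Nat.sqrt n + 1 + (N + 1) := by
      intro n
      have hsub : (Finset.range n).filter (fun k => ε ≤ |(|x k - 0|) - 1|) ⊆
          (Finset.range n).filter (fun k => ∃ m : ℕ, k = m ^ 2) ∪ Finset.range (N + 1) := by
        intro k hk
        simp only [Finset.mem_filter, Finset.mem_range] at hk
        rcases key k hk.2 with h | h
        · exact Finset.mem_union_left _ (Finset.mem_filter.mpr ⟨Finset.mem_range.mpr hk.1, h⟩)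
        · exact Finset.mem_union_right _ (Finset.mem_range.mpr (Nat.lt_succ_of_le h))
      calc _ ≤ _ := Finset.card_le_card hsub
        _ ≤ ((Finset.range n).filter (fun k => ∃ m : ℕ, k = m ^ 2)).card
              + (Finset.range (N+1)).card := Finset.card_union_le _ _
        _ ≤ Nat.sqrt n + 1 + (N + 1) := by
            have := sqrt_filter_card n
            simp only [Finset.card_range]
            omega
    -- squeeze
    have hbound : Tendsto (fun n : ℕ => ((Nat.sqrt n + 1 + (N+1) : ℕ) : ℝ) / n)
        atTop (nhds 0) := by
      have h1 : Tendsto (fun n : ℕ => (Nat.sqrt n : ℝ) / n) atTop (nhds 0) := by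
        have hupper : ∀ᶠ n : ℕ in atTop, (Nat.sqrt n : ℝ) / n ≤ 1 / Real.sqrt n := by
          filter_upwards [eventually_ge_atTop 1] with n hn
          have hn0 : (0:ℝ) < n := by exact_mod_cast hn
          have h2 : ((Nat.sqrt n : ℝ)) ^ 2 ≤ (n : ℝ) := by
            exact_mod_cast Nat.sqrt_le' n
          have hs : (Nat.sqrt n : ℝ) ≤ Real.sqrt n := by
            rw [show ((Nat.sqrt n : ℝ)) = Real.sqrt (((Nat.sqrt n : ℝ))^2) from
              (Real.sqrt_sq (by positivity)).symm]
            exact Real.sqrt_le_sqrt h2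
          calc (Nat.sqrt n : ℝ) / n ≤ Real.sqrt n / n := by gcongr
            _ = 1 / Real.sqrt n := Real.sqrt_div_self'
        have hsqrtTop : Tendsto Real.sqrt atTop atTop := by
          apply tendsto_atTop_atTop.mpr
          intro b
          refine ⟨max (b^2) 0, fun a ha => ?_⟩
          calc b ≤ |b| := le_abs_self b
            _ = Real.sqrt (b^2) := (Real.sqrt_sq_eq_abs b).symm
            _ ≤ Real.sqrt a := Real.sqrt_le_sqrt ((le_max_left _ _).trans ha)
        have hlim : Tendsto (fun n : ℕ => 1 / Real.sqrt n) atTop (nhds 0) := by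
          simp only [one_div]; exact
            (hsqrtTop.comp tendsto_natCast_atTop_atTop).inv_tendsto_atTop
        refine squeeze_zero' ?_ hupper hlim
        filter_upwards with n
        positivity
      have h2 : Tendsto (fun n : ℕ => ((N + 2 : ℕ) : ℝ) / n) atTop (nhds 0) :=
        tendsto_const_div_atTop_nhds_zero_nat _
      have := h1.add h2
      simp only [add_zero] at this
      refine this.congr ?_
      intro n
      push_cast
      ring
    refine squeeze_zero' ?_ ?_ hbound
    · filter_upwards with n; positivity
    · filter_upwards with n
      rcases Nat.eq_zero_or_pos n with h0 | h1
      · simp [h0]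
      · have hn0 : (0:ℝ) < n := by exact_mod_cast h1
        have h' : (((Finset.range n).filter (fun k => ε ≤ |(|x k - 0|) - 1|)).card : ℝ)
            ≤ ((Nat.sqrt n + 1 + (N + 1) : ℕ) : ℝ) := by exact_mod_cast hcard n
        gcongr
  · -- not maximizing
    rintro ⟨p, hp⟩
    have hsq : Tendsto (fun m : ℕ => |x (m ^ 2) - p|) atTop
        (nhds (fdist p (Set.Icc (-1 : ℝ) 1))) := by
      exact hp.comp (tendsto_atTop_atTop.mpr (fun b => ⟨b, fun m hm => le_trans hm (Nat.le_self_pow (by norm_num) m)⟩))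
    have hconst : ∀ m : ℕ, |x (m ^ 2) - p| = |p| := by
      intro m
      rw [hx]
      simp [abs_sub_comm]
    rw [show (fun m : ℕ => |x (m ^ 2) - p|) = fun _ => |p| from funext hconst] at hsq
    have : fdist p (Set.Icc (-1 : ℝ) 1) = |p| := tendsto_nhds_unique hsq tendsto_const_nhds
    have := fdist_lower p
    linarith
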